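/- arXiv:2006.14948 — 9 statements merged into one kernel-verified Lean document; each statement's English description precedes it below -/
import Mathlib

section
/- Let f = a_0 + a_1X + ⋯ + a_nX^n be an element of T = A + XB[X] (so a_0 ∈ A and a_1, …, a_n ∈ B). Then f is a unit of the ring T if and only if a_0 is a unit of A (i.e., a_0 has a multiplicative inverse lying in A) and a_1, a_2, …, a_n are nilpotent elements of B. -/
/-- The composite `T = A + X B[X]`: the subring of the polynomial ring `B[X]`
consisting of all polynomials whose constant coefficient lies in the subring `A`. -/
def polynomialComposite (B : Type*) [CommRing B] (A : Subring B) :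
    Subring (Polynomial B) where
  carrier := {f | f.coeff 0 ∈ A}
  zero_mem' := by simpa using zero_mem A
  one_mem' := by simpa using one_mem A
  add_mem' := fun hf hg => by
    simpa [Polynomial.coeff_add] using add_mem hf hg
  neg_mem' := fun hf => by
    simpa [Polynomial.coeff_neg] using neg_mem (s := A) hf
  mul_mem' := fun hf hg => by
    simpa [Polynomial.mul_coeff_zero] using mul_mem hf hg

/-- Let `f = a_0 + a_1 X + ⋯ + a_n X^n` be an element of `T = A + X B[X]`
(so `a_0 ∈ A` and the other coefficients are in `B`).  Then `f` is a unit of the ring `T`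
if and only if `a_0` is a unit of the ring `A` (i.e. its inverse lies in `A`) and all the
higher coefficients `a_1, …, a_n` are nilpotent elements of `B`. -/
theorem isUnit_polynomialComposite_iff (B : Type*) [CommRing B] (A : Subring B)
    (f : Polynomial B) (hf : f ∈ polynomialComposite B A) :
    IsUnit (⟨f, hf⟩ : polynomialComposite B A) ↔
      IsUnit (⟨f.coeff 0, hf⟩ : A) ∧ ∀ i : ℕ, i ≠ 0 → IsNilpotent (f.coeff i) := by
  constructor
  · intro h
    obtain ⟨g, hg⟩ := h.exists_right_inv
    have hfg : f * g.val = 1 := congrArg Subtype.val hg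
    have hc0 : f.coeff 0 * g.val.coeff 0 = 1 := by
      have := congrArg (fun p => Polynomial.coeff p 0) hfg
      simpa [Polynomial.mul_coeff_zero] using this
    have hfu : IsUnit f := IsUnit.of_mul_eq_one (a := f) g.val hfg
    refine ⟨IsUnit.of_mul_eq_one (⟨g.val.coeff 0, g.2⟩ : A) (Subtype.ext hc0), ?_⟩
    exact (Polynomial.isUnit_iff_coeff_isUnit_isNilpotent.mp hfu).2
  · rintro ⟨h0, hn⟩
    have hfu : IsUnit f :=
      Polynomial.isUnit_of_coeff_isUnit_isNilpotent (h0.map A.subtype) hn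
    obtain ⟨g, hg⟩ := hfu.exists_right_inv
    have hc0 : f.coeff 0 * g.coeff 0 = 1 := by
      have := congrArg (fun p => Polynomial.coeff p 0) hg
      simpa [Polynomial.mul_coeff_zero] using this
    obtain ⟨b, hb⟩ := h0.exists_right_inv
    have hbval : f.coeff 0 * b.val = 1 := congrArg Subtype.val hb
    have hgA : g.coeff 0 = b.val := by
      have : b.val * (f.coeff 0 * g.coeff 0) = b.val * (f.coeff 0 * b.val) := by
        rw [hc0, hbval]
      rwa [← mul_assoc, ← mul_assoc, mul_comm b.val (f.coeff 0), hbval, one_mul,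
        one_mul] at this
    have hgmem : g ∈ polynomialComposite B A := by
      show g.coeff 0 ∈ A
      rw [hgA]; exact b.2
    exact IsUnit.of_mul_eq_one (a := (⟨f, hf⟩ : polynomialComposite B A)) ⟨g, hgmem⟩
      (Subtype.ext hg)
end

section
/- Let n ≥ 1, let A_0 ⊆ A_1 ⊆ ⋯ ⊆ A_{n-1} ⊆ B be subrings of a commutative ring B with unity, and let f = a_0 + a_1X + ⋯ + a_mX^m ∈ T_n (so a_i ∈ A_i for i < n and a_j ∈ B for j ≥ n). Then: (i) f is a unit of the ring T_n if and only if a_0 is a unit of A_0 (its inverse lies in A_0) and a_1, …, a_m are nilpotent in B; (ii) f is nilpotent if and only if a_0, a_1, …, a_m are all nilpotent in B. -/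
/-- The composite `T_n = A_0 + A_1 X + ⋯ + A_{n-1} X^{n-1} + X^n B[X]` for a chain of
subrings `A 0 ⊆ A 1 ⊆ ⋯ ⊆ A (n-1) ⊆ B`: the subring of `B[X]` of polynomials whose
`i`-th coefficient lies in `A i` for all `i < n`. -/
def polynomialCompositeN (B : Type*) [CommRing B] (n : ℕ) (A : ℕ → Subring B)
    (hA : ∀ i j, i ≤ j → j < n → A i ≤ A j) : Subring (Polynomial B) where
  carrier := {f | ∀ i, i < n → f.coeff i ∈ A i}
  zero_mem' := fun i _ => by simpa using zero_mem (A i)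
  one_mem' := fun i _ => by
    rw [Polynomial.coeff_one]
    split
    · exact one_mem (A i)
    · exact zero_mem (A i)
  add_mem' := fun hf hg i hi => by
    simpa [Polynomial.coeff_add] using add_mem (hf i hi) (hg i hi)
  neg_mem' := fun hf i hi => by
    simpa [Polynomial.coeff_neg] using neg_mem (s := A i) (hf i hi)
  mul_mem' := by
    intro f g hf hg k hk
    rw [Polynomial.coeff_mul]
    refine sum_mem ?_
    rintro ⟨i, j⟩ hij
    rw [Finset.HasAntidiagonal.mem_antidiagonal] at hij
    have hi : i ≤ k := by omega
    have hj : j ≤ k := by omega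
    exact mul_mem (hA i k hi hk (hf i (lt_of_le_of_lt hi hk)))
      (hA j k hj hk (hg j (lt_of_le_of_lt hj hk)))

/-- Let `n ≥ 1`, let `A 0 ⊆ A 1 ⊆ ⋯ ⊆ A (n-1) ⊆ B` be subrings of a
commutative ring `B` with unity, and let `f = a_0 + a_1 X + ⋯ + a_m X^m ∈ T_n`
(so `a_i ∈ A i` for `i < n`).  Then:
(i) `f` is a unit of the ring `T_n` iff `a_0` is a unit of `A 0` (its inverse lies in
`A 0`) and all higher coefficients `a_1, …, a_m` are nilpotent in `B`;
(ii) `f` is nilpotent iff all the coefficients `a_0, a_1, …, a_m` are nilpotent in `B`. -/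
theorem isUnit_isNilpotent_polynomialCompositeN_iff (B : Type*) [CommRing B]
    (n : ℕ) (hn : 1 ≤ n) (A : ℕ → Subring B) (hA : ∀ i j, i ≤ j → j < n → A i ≤ A j)
    (f : Polynomial B) (hf : f ∈ polynomialCompositeN B n A hA) :
    (IsUnit (⟨f, hf⟩ : polynomialCompositeN B n A hA) ↔
        IsUnit (⟨f.coeff 0, hf 0 hn⟩ : A 0) ∧
          ∀ i : ℕ, i ≠ 0 → IsNilpotent (f.coeff i)) ∧
      (IsNilpotent (⟨f, hf⟩ : polynomialCompositeN B n A hA) ↔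
        ∀ i : ℕ, IsNilpotent (f.coeff i)) := by
  classical
  set T := polynomialCompositeN B n A hA with hT
  -- nilpotency transfers along the subring inclusion
  have hnil : ∀ g : T, IsNilpotent g ↔ IsNilpotent (g : Polynomial B) := by
    intro g
    constructor
    · rintro ⟨k, hk⟩
      exact ⟨k, by simpa using congrArg (Subtype.val) hk⟩
    · rintro ⟨k, hk⟩
      exact ⟨k, Subtype.ext (by simpa using hk)⟩
  constructor
  · constructor
    · rintro hu
      have hg := hu
      obtain ⟨u, hu'⟩ := hg
      -- inverse g
      have hmul : (u : T) * (↑u⁻¹ : T) = 1 := by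
        rw [← Units.val_mul, mul_inv_cancel, Units.val_one]
      set g : T := (↑u⁻¹ : T) with hgdef
      have hfg : f * (g : Polynomial B) = 1 := by
        have := congrArg (Subtype.val) hmul
        simpa [hu'] using this
      constructor
      · -- coeff 0 is a unit in A 0
        have hb : (g : Polynomial B).coeff 0 ∈ A 0 := g.2 0 hn
        refine IsUnit.of_mul_eq_one ⟨(g : Polynomial B).coeff 0, hb⟩ ?_
        apply Subtype.ext
        have := congrArg (fun p => Polynomial.coeff p 0) hfg
        simpa [Polynomial.mul_coeff_zero] using this
      · -- higher coefficients nilpotent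
        have hUf : IsUnit f := IsUnit.of_mul_eq_one _ hfg
        rw [Polynomial.isUnit_iff_coeff_isUnit_isNilpotent] at hUf
        exact hUf.2
    · rintro ⟨h0, hnilp⟩
      -- decompose f = C a0 + (f - C a0)
      obtain ⟨v, hv⟩ := h0
      set a0 : B := f.coeff 0 with ha0
      have hCa0 : Polynomial.C a0 ∈ T := by
        intro i hi
        rcases Nat.eq_zero_or_pos i with rfl | hi0
        · simpa using hf 0 hn
        · rw [Polynomial.coeff_C, if_neg (by omega)]
          exact zero_mem _
      have hbmem : ((↑v⁻¹ : A 0) : B) ∈ A 0 := (↑v⁻¹ : A 0).2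
      have hCb : Polynomial.C ((↑v⁻¹ : A 0) : B) ∈ T := by
        intro i hi
        rcases Nat.eq_zero_or_pos i with rfl | hi0
        · simp only [Polynomial.coeff_C_zero]; exact hA 0 0 le_rfl hn hbmem
        · rw [Polynomial.coeff_C, if_neg (by omega)]
          exact zero_mem _
      have hAi : ∀ i, i < n → a0 ∈ A i := fun i hi => hA 0 i (Nat.zero_le _) hi (hf 0 hn)
      have hCa0' : ∀ i, i < n → (Polynomial.C a0).coeff i ∈ A i := hCa0
      have hunit : IsUnit (⟨Polynomial.C a0, hCa0⟩ : T) := by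
        refine IsUnit.of_mul_eq_one ⟨Polynomial.C ((↑v⁻¹ : A 0) : B), hCb⟩ ?_
        apply Subtype.ext
        show Polynomial.C a0 * Polynomial.C _ = 1
        rw [← Polynomial.C_mul, ← Polynomial.C_1]
        congr 1
        have : (⟨a0, hf 0 hn⟩ : A 0) * (↑v⁻¹ : A 0) = 1 := by
          rw [← hv, Units.mul_inv]
        exact congrArg Subtype.val this
      have hsubmem : f - Polynomial.C a0 ∈ T := sub_mem hf hCa0
      have hN : IsNilpotent (⟨f - Polynomial.C a0, hsubmem⟩ : T) := by
        rw [hnil]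
        show IsNilpotent (f - Polynomial.C a0)
        rw [Polynomial.isNilpotent_iff]
        intro i
        rcases Nat.eq_zero_or_pos i with rfl | hi0
        · simp [a0]
        · rw [Polynomial.coeff_sub, Polynomial.coeff_C, if_neg (by omega), sub_zero]
          exact hnilp i (by omega)
      have := hN.isUnit_add_left_of_commute hunit (Commute.all _ _)
      convert this using 1
      apply Subtype.ext
      show f = Polynomial.C a0 + (f - Polynomial.C a0)
      ring
  · rw [hnil, Polynomial.isNilpotent_iff]
end

section
/- Let A ⊆ B be fields and let T = A + XB[X]. An element f ∈ T is irreducible in T if and only if either f = aX for some nonzero a ∈ B, or f = a(1 + Xg) for some nonzero a ∈ A and some g ∈ B[X] such that 1 + Xg is irreducible in the polynomial ring B[X]. -/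
open Polynomial

/-- The composite `T = A + X B[X]` for a subfield `A` of a field `B`: the subring
(an integral domain) of the polynomial ring `B[X]` consisting of all polynomials
whose constant coefficient lies in `A`. -/
def fieldComposite (B : Type*) [Field B] (A : Subfield B) :
    Subring (Polynomial B) where
  carrier := {f | f.coeff 0 ∈ A}
  zero_mem' := by simpa using zero_mem A
  one_mem' := by simpa using one_mem A
  add_mem' := fun hf hg => by
    simpa [Polynomial.coeff_add] using add_mem hf hg
  neg_mem' := fun hf => by
    simpa [Polynomial.coeff_neg] using neg_mem (s := A) hf
  mul_mem' := fun hf hg => by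
    simpa [Polynomial.mul_coeff_zero] using mul_mem hf hg

lemma mem_fieldComposite {B : Type*} [Field B] {A : Subfield B} {p : Polynomial B} :
    p ∈ fieldComposite B A ↔ p.coeff 0 ∈ A := Iff.rfl

lemma isUnit_fieldComposite_iff {B : Type*} [Field B] {A : Subfield B}
    (p : fieldComposite B A) : IsUnit p ↔ IsUnit (p : Polynomial B) := by
  constructor
  · intro h; exact h.map (fieldComposite B A).subtype
  · intro h
    obtain ⟨a, ha, hpa⟩ := Polynomial.isUnit_iff.mp h
    have ha0 : a ≠ 0 := ha.ne_zero
    have haA : a ∈ A := by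
      have := p.2
      rw [← hpa] at this
      simpa [mem_fieldComposite] using this
    refine IsUnit.of_mul_eq_one (a := p) ⟨Polynomial.C a⁻¹, by
      simpa [mem_fieldComposite] using A.inv_mem haA⟩ ?_
    apply Subtype.ext
    show (p : Polynomial B) * Polynomial.C a⁻¹ = 1
    rw [← hpa, ← Polynomial.C_mul, mul_inv_cancel₀ ha0, Polynomial.C_1]

/-- If the image of `f` in `B[X]` is irreducible, then `f` is irreducible in `T`. -/
lemma irreducible_of_coe {B : Type*} [Field B] {A : Subfield B}
    (f : fieldComposite B A) (h : Irreducible (f : Polynomial B)) : Irreducible f := by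
  constructor
  · rw [isUnit_fieldComposite_iff]; exact h.not_isUnit
  · intro p q hpq
    rw [isUnit_fieldComposite_iff, isUnit_fieldComposite_iff]
    exact h.isUnit_or_isUnit (by exact_mod_cast congrArg Subtype.val hpq)

/-- Let `A ⊆ B` be fields and let `T = A + X B[X]`.  An element `f ∈ T`
is irreducible in `T` if and only if either `f = a X` for some nonzero `a ∈ B`, or
`f = a (1 + X g)` for some nonzero `a ∈ A` and some `g ∈ B[X]` such that `1 + X g` is
irreducible in the polynomial ring `B[X]`. -/
theorem irreducible_fieldComposite_iff (B : Type*) [Field B] (A : Subfield B)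
    (f : fieldComposite B A) :
    Irreducible f ↔
      (∃ a : B, a ≠ 0 ∧ (f : Polynomial B) = Polynomial.C a * Polynomial.X) ∨
        (∃ a ∈ A, a ≠ 0 ∧ ∃ g : Polynomial B,
          (f : Polynomial B) = Polynomial.C a * (1 + Polynomial.X * g) ∧
            Irreducible (1 + Polynomial.X * g)) := by
  constructor
  · intro hirr
    have hf0 : (f : Polynomial B) ≠ 0 := by
      intro h
      exact hirr.ne_zero (Subtype.ext h)
    by_cases h0 : (f : Polynomial B).coeff 0 = 0
    · -- f = X * h
      left
      obtain ⟨h, hh⟩ := (Polynomial.X_dvd_iff.mpr h0)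
      by_cases hb : h.coeff 0 = 0
      · -- f = X * (X * k), contradiction
        exfalso
        obtain ⟨k, hk⟩ := (Polynomial.X_dvd_iff.mpr hb)
        have hx : (⟨Polynomial.X, by
              simpa [mem_fieldComposite] using zero_mem A⟩ : fieldComposite B A) *
            ⟨h, by simpa [mem_fieldComposite, hb] using zero_mem A⟩ = f := by
          apply Subtype.ext
          exact hh.symm
        rcases hirr.isUnit_or_isUnit hx.symm with hu | hu
        · rw [isUnit_fieldComposite_iff] at hu
          obtain ⟨a, _, ha⟩ := Polynomial.isUnit_iff.mp hu
          exact Polynomial.X_ne_C a ha.symm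
        · rw [isUnit_fieldComposite_iff] at hu
          obtain ⟨a, hau, ha⟩ := Polynomial.isUnit_iff.mp hu
          have : a = 0 := by
            have := congrArg (fun p => Polynomial.coeff p 0) ha
            simpa [hb] using this
          exact hau.ne_zero this
      · -- h has nonzero constant coefficient b
        set b := h.coeff 0 with hbdef
        have hfac : (⟨Polynomial.C b * Polynomial.X, by
              simpa [mem_fieldComposite] using zero_mem A⟩ :
              fieldComposite B A) *
            ⟨Polynomial.C b⁻¹ * h, by
              simpa [mem_fieldComposite, Polynomial.coeff_C_mul, ← hbdef,
                inv_mul_cancel₀ hb] using one_mem A⟩ = f := by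
          apply Subtype.ext
          show Polynomial.C b * Polynomial.X * (Polynomial.C b⁻¹ * h) = _
          rw [hh, show Polynomial.C b * Polynomial.X * (Polynomial.C b⁻¹ * h) =
            (Polynomial.C b * Polynomial.C b⁻¹) * (Polynomial.X * h) by ring,
            ← Polynomial.C_mul, mul_inv_cancel₀ hb, Polynomial.C_1, one_mul]
        rcases hirr.isUnit_or_isUnit hfac.symm with hu | hu
        · exfalso
          rw [isUnit_fieldComposite_iff] at hu
          obtain ⟨a, _, ha⟩ := Polynomial.isUnit_iff.mp hu
          have := congrArg Polynomial.natDegree ha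
          simp [Polynomial.natDegree_C_mul hb] at this
        · rw [isUnit_fieldComposite_iff] at hu
          obtain ⟨a, _, ha⟩ := Polynomial.isUnit_iff.mp hu
          -- C b⁻¹ * h = C a so h = C (b * a); constant term gives b * a = b, so h = C b
          have hhC : h = Polynomial.C (b * a) := by
            have : h = Polynomial.C b * Polynomial.C a := by
              calc h = Polynomial.C b * (Polynomial.C b⁻¹ * h) := by
                    rw [← mul_assoc, ← Polynomial.C_mul, mul_inv_cancel₀ hb,
                      Polynomial.C_1, one_mul]
                _ = Polynomial.C b * Polynomial.C a := by rw [ha]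
            rwa [← Polynomial.C_mul] at this
          have hba : b * a = b := by
            have := congrArg (fun p => Polynomial.coeff p 0) hhC
            simpa [← hbdef] using this.symm
          refine ⟨b, hb, ?_⟩
          rw [hh, hhC, hba, mul_comm]
    · -- nonzero constant coefficient
      right
      obtain ⟨a, hadef⟩ : ∃ a, (f : Polynomial B).coeff 0 = a := ⟨_, rfl⟩
      rw [hadef] at h0
      have haA : a ∈ A := hadef ▸ f.2
      refine ⟨a, haA, h0, ?_⟩
      have hp0 : (Polynomial.C a⁻¹ * (f : Polynomial B) - 1).coeff 0 = 0 := by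
        rw [Polynomial.coeff_sub, Polynomial.coeff_C_mul, hadef, inv_mul_cancel₀ h0]
        simp
      obtain ⟨g, hg⟩ := Polynomial.X_dvd_iff.mpr hp0
      have hpeq : Polynomial.C a⁻¹ * (f : Polynomial B) = 1 + Polynomial.X * g := by
        linear_combination hg
      have hfeq : (f : Polynomial B) = Polynomial.C a * (1 + Polynomial.X * g) := by
        rw [← hpeq, ← mul_assoc, ← Polynomial.C_mul, mul_inv_cancel₀ h0,
          Polynomial.C_1, one_mul]
      refine ⟨g, hfeq, ?_, ?_⟩
      · -- not a unit
        intro hu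
        obtain ⟨c, hcu, hc⟩ := Polynomial.isUnit_iff.mp hu
        apply hirr.not_isUnit
        rw [isUnit_fieldComposite_iff, hfeq, ← hc, ← Polynomial.C_mul]
        exact Polynomial.isUnit_C.mpr ((isUnit_iff_ne_zero.mpr h0).mul hcu)
      · -- factorization
        intro u v huv
        by_contra hcon
        push_neg at hcon
        obtain ⟨hu, hv⟩ := hcon
        have huv0 : u.coeff 0 * v.coeff 0 = 1 := by
          have := congrArg (fun p => Polynomial.coeff p 0) huv
          simpa [Polynomial.mul_coeff_zero] using this.symm
        have hu0 : u.coeff 0 ≠ 0 := fun h => by simp [h] at huv0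
        have hv0 : v.coeff 0 ≠ 0 := fun h => by simp [h] at huv0
        set c := u.coeff 0 with hcdef
        -- u' = C c⁻¹ * u ∈ T, v' = C (a * c) * v ∈ T, u' * v' = f
        have hmemu : Polynomial.C c⁻¹ * u ∈ fieldComposite B A := by
          simpa [mem_fieldComposite, Polynomial.coeff_C_mul, ← hcdef,
            inv_mul_cancel₀ hu0] using one_mem A
        have hmemv : Polynomial.C (a * c) * v ∈ fieldComposite B A := by
          have : (a * c) * v.coeff 0 = a := by
            rw [mul_assoc, hcdef, huv0, mul_one]
          simp [mem_fieldComposite, Polynomial.coeff_C_mul, this, haA]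
        have hfac : (⟨_, hmemu⟩ : fieldComposite B A) * ⟨_, hmemv⟩ = f := by
          apply Subtype.ext
          show Polynomial.C c⁻¹ * u * (Polynomial.C (a * c) * v) = _
          have hca : c⁻¹ * (a * c) = a := by
            rw [mul_comm a c, ← mul_assoc, inv_mul_cancel₀ hu0, one_mul]
          calc Polynomial.C c⁻¹ * u * (Polynomial.C (a * c) * v)
              = Polynomial.C (c⁻¹ * (a * c)) * (u * v) := by
                simp only [Polynomial.C_mul]; ring
            _ = Polynomial.C a * (1 + Polynomial.X * g) := by rw [hca, ← huv]
            _ = ↑f := hfeq.symm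
        rcases hirr.isUnit_or_isUnit hfac.symm with hw | hw
        · rw [isUnit_fieldComposite_iff] at hw
          apply hu
          have : IsUnit (Polynomial.C c * (Polynomial.C c⁻¹ * u)) :=
            (Polynomial.isUnit_C.mpr (isUnit_iff_ne_zero.mpr hu0)).mul hw
          rwa [← mul_assoc, ← Polynomial.C_mul, mul_inv_cancel₀ hu0, Polynomial.C_1,
            one_mul] at this
        · rw [isUnit_fieldComposite_iff] at hw
          apply hv
          have hac : a * c ≠ 0 := mul_ne_zero h0 hu0
          have : IsUnit (Polynomial.C (a * c)⁻¹ * (Polynomial.C (a * c) * v)) :=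
            (Polynomial.isUnit_C.mpr (isUnit_iff_ne_zero.mpr (inv_ne_zero hac))).mul hw
          rwa [← mul_assoc, ← Polynomial.C_mul, inv_mul_cancel₀ hac, Polynomial.C_1,
            one_mul] at this
  · rintro (⟨a, ha, hfa⟩ | ⟨a, haA, ha, g, hfa, hgirr⟩)
    · apply irreducible_of_coe
      rw [hfa]
      have : Associated Polynomial.X (Polynomial.C a * Polynomial.X) := by
        refine Associated.symm ⟨(Polynomial.isUnit_C.mpr (isUnit_iff_ne_zero.mpr ha)).unit⁻¹, ?_⟩
        rw [mul_comm]
        rw [← mul_assoc]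
        simp [IsUnit.val_inv_mul]
      exact this.irreducible Polynomial.irreducible_X
    · apply irreducible_of_coe
      rw [hfa]
      have : Associated (1 + Polynomial.X * g) (Polynomial.C a * (1 + Polynomial.X * g)) := by
        exact ⟨(Polynomial.isUnit_C.mpr (isUnit_iff_ne_zero.mpr ha)).unit, by
          simp [mul_comm]⟩
      exact this.irreducible hgirr
end

section
/- Let A ⊆ B be fields and let T = A + XB[X]. Then every nonzero prime ideal of T is a maximal ideal of T. -/
open Polynomial

/-- Let `A ⊆ B` be fields and let `T = A + X B[X]`.  Then every nonzero
prime ideal of `T` is a maximal ideal of `T`. -/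
theorem fieldComposite_prime_ideal_isMaximal (B : Type*) [Field B] (A : Subfield B)
    (P : Ideal (fieldComposite B A)) (hP0 : P ≠ ⊥) (hP : P.IsPrime) :
    P.IsMaximal := by
  classical
  have hmemX : ∀ β : Polynomial B, X * β ∈ fieldComposite B A := by
    intro β
    show (X * β).coeff 0 ∈ A
    rw [Polynomial.mul_coeff_zero, Polynomial.coeff_X_zero, zero_mul]
    exact A.zero_mem
  have hXT : X ∈ fieldComposite B A := by simpa using hmemX 1
  have hmemC : ∀ b : B, b ∈ A → (C b : Polynomial B) ∈ fieldComposite B A := by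
    intro b hb
    show (C b : Polynomial B).coeff 0 ∈ A
    simpa using hb
  have key : ∀ t : fieldComposite B A, t ∉ P →
      ∃ s : fieldComposite B A, t * s - 1 ∈ P := by
    by_cases hcase : ∃ g ∈ P, (g : Polynomial B).coeff 0 ≠ 0
    · -- Case B : P contains an element with nonzero constant term
      obtain ⟨g, hgP, hg0⟩ := hcase
      set a : B := (g : Polynomial B).coeff 0 with ha
      have haA : a ∈ A := g.2
      have haiA : a⁻¹ ∈ A := A.inv_mem haA
      have hCa : ((g : Polynomial B) - C a).coeff 0 = 0 := by simp [ha]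
      obtain ⟨w, hw⟩ : X ∣ ((g : Polynomial B) - C a) := X_dvd_iff.mpr hCa
      have hinv : (C a⁻¹ : Polynomial B) * C a = 1 := by
        rw [← C_mul, inv_mul_cancel₀ hg0, C_1]
      -- X ∉ P
      have hXP : (⟨X, hXT⟩ : fieldComposite B A) ∉ P := by
        intro hX
        have hsq : ((g - ⟨C a, hmemC a haA⟩ : fieldComposite B A)) ^ 2
            = ⟨X, hXT⟩ * ⟨X * w ^ 2, hmemX _⟩ := by
          apply Subtype.ext
          push_cast
          rw [hw]; ring
        have h2 : (g - ⟨C a, hmemC a haA⟩ : fieldComposite B A) ∈ P := by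
          refine hP.mem_of_pow_mem 2 ?_
          rw [hsq]
          exact Ideal.mul_mem_right _ _ hX
        have hCaP : (⟨C a, hmemC a haA⟩ : fieldComposite B A) ∈ P := by
          have : (⟨C a, hmemC a haA⟩ : fieldComposite B A) = g - (g - ⟨C a, hmemC a haA⟩) := by ring
          rw [this]
          exact Ideal.sub_mem _ hgP h2
        have h1 : (1 : fieldComposite B A) ∈ P := by
          have : (1 : fieldComposite B A) = ⟨C a, hmemC a haA⟩ * ⟨C a⁻¹, hmemC _ haiA⟩ := by
            apply Subtype.ext
            push_cast
            rw [← C_mul, mul_inv_cancel₀ hg0, C_1]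
          rw [this]
          exact Ideal.mul_mem_right _ _ hCaP
        exact hP.ne_top ((Ideal.eq_top_iff_one _).mpr h1)
      -- the ideal Q of B[X]
      set Q : Ideal (Polynomial B) :=
        { carrier := {β | (⟨X * β, hmemX β⟩ : fieldComposite B A) ∈ P}
          zero_mem' := by
            show (⟨X * 0, hmemX 0⟩ : fieldComposite B A) ∈ P
            have : (⟨X * 0, hmemX 0⟩ : fieldComposite B A) = 0 :=
              Subtype.ext (by simp)
            rw [this]; exact P.zero_mem
          add_mem' := by
            intro β γ hβ hγ
            have : (⟨X * (β + γ), hmemX _⟩ : fieldComposite B A)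
                = ⟨X * β, hmemX _⟩ + ⟨X * γ, hmemX _⟩ :=
              Subtype.ext (by push_cast; ring)
            simpa [Set.mem_setOf_eq, this] using P.add_mem hβ hγ
          smul_mem' := by
            intro c β hβ
            simp only [Set.mem_setOf_eq, smul_eq_mul] at *
            have hprod : (⟨X, hXT⟩ : fieldComposite B A) * ⟨X * (c * β), hmemX _⟩
                = ⟨X * c, hmemX _⟩ * ⟨X * β, hmemX _⟩ :=
              Subtype.ext (by push_cast; ring)
            have : (⟨X, hXT⟩ : fieldComposite B A) * ⟨X * (c * β), hmemX _⟩ ∈ P := by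
              rw [hprod]; exact Ideal.mul_mem_left _ _ hβ
            exact (hP.mem_or_mem this).resolve_left hXP } with hQdef
      have hQmem : ∀ β : Polynomial B,
          β ∈ Q ↔ (⟨X * β, hmemX β⟩ : fieldComposite B A) ∈ P := fun β => Iff.rfl
      have hQprime : Q.IsPrime := by
        constructor
        · intro htop
          have h1 : (1 : Polynomial B) ∈ Q := htop ▸ Submodule.mem_top
          rw [hQmem] at h1
          have : (⟨X * 1, hmemX 1⟩ : fieldComposite B A) = ⟨X, hXT⟩ :=
            Subtype.ext (by simp)
          rw [this] at h1
          exact hXP h1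
        · intro β γ hβγ
          rw [hQmem] at hβγ
          have hprod : (⟨X, hXT⟩ : fieldComposite B A) * ⟨X * (β * γ), hmemX _⟩
              = ⟨X * β, hmemX _⟩ * ⟨X * γ, hmemX _⟩ :=
            Subtype.ext (by push_cast; ring)
          have hm : (⟨X * β, hmemX _⟩ : fieldComposite B A) * ⟨X * γ, hmemX _⟩ ∈ P := by
            rw [← hprod]; exact Ideal.mul_mem_left _ _ hβγ
          rcases hP.mem_or_mem hm with h | h
          · exact Or.inl ((hQmem β).mpr h)
          · exact Or.inr ((hQmem γ).mpr h)
      have hQne : Q ≠ ⊥ := by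
        intro hbot
        have hgQ : (g : Polynomial B) ∈ Q := by
          rw [hQmem]
          have : (⟨X * (g : Polynomial B), hmemX _⟩ : fieldComposite B A)
              = ⟨X, hXT⟩ * g := Subtype.ext rfl
          rw [this]
          exact Ideal.mul_mem_left _ _ hgP
        rw [hbot, Ideal.mem_bot] at hgQ
        exact hg0 (by rw [ha, hgQ]; simp)
      haveI := hQprime
      have hQmax : Q.IsMaximal := IsPrime.to_maximal_ideal hQne
      -- now the key property
      intro t htP
      have htQ : (t : Polynomial B) ∉ Q := by
        intro htQ
        rw [hQmem] at htQ
        have : (⟨X * (t : Polynomial B), hmemX _⟩ : fieldComposite B A)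
            = ⟨X, hXT⟩ * t := Subtype.ext rfl
        rw [this] at htQ
        rcases hP.mem_or_mem htQ with h | h
        · exact hXP h
        · exact htP h
      obtain ⟨y, i, hiQ, hyi⟩ := hQmax.exists_inv htQ
      have hm1 : y * (t : Polynomial B) - 1 ∈ Q := by
        have : y * (t : Polynomial B) - 1 = -i := by linear_combination hyi
        rw [this]
        exact Q.neg_mem hiQ
      rw [hQmem] at hm1
      -- v and u
      set v : Polynomial B := -(C a⁻¹ * w) with hv
      have hu1 : (⟨X * v, hmemX v⟩ : fieldComposite B A) - 1
          = ⟨-(C a⁻¹), (fieldComposite B A).neg_mem (hmemC _ haiA)⟩ * g := by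
        apply Subtype.ext
        push_cast
        rw [hv]
        linear_combination (C a⁻¹ : Polynomial B) * hw + hinv
      have huP : (⟨X * v, hmemX v⟩ : fieldComposite B A) - 1 ∈ P := by
        rw [hu1]
        exact Ideal.mul_mem_left _ _ hgP
      refine ⟨⟨X * (X * (X * (y * v ^ 3))), hmemX _⟩, ?_⟩
      have hiden : t * ⟨X * (X * (X * (y * v ^ 3))), hmemX _⟩ - 1
          = ⟨X * (y * (t : Polynomial B) - 1), hmemX _⟩ * ⟨X * (X * v ^ 3), hmemX _⟩
            + ((⟨X * v, hmemX v⟩ : fieldComposite B A) - 1)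
              * ((⟨X * v, hmemX v⟩ : fieldComposite B A) ^ 2 + ⟨X * v, hmemX v⟩ + 1) := by
        apply Subtype.ext
        push_cast
        ring
      rw [hiden]
      exact Ideal.add_mem _ (Ideal.mul_mem_right _ _ hm1) (Ideal.mul_mem_right _ _ huP)
    · -- Case A : every element of P has zero constant term
      push_neg at hcase
      obtain ⟨f, hfP, hf0⟩ := Submodule.exists_mem_ne_zero_of_ne_bot hP0
      have hfv : (f : Polynomial B) ≠ 0 := fun h => hf0 (Subtype.ext h)
      set k : ℕ := (f : Polynomial B).natTrailingDegree with hk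
      set b : B := (f : Polynomial B).coeff k with hb
      have hbne : b ≠ 0 := by
        rw [hb, hk, ← Polynomial.trailingCoeff]
        exact fun h => hfv (Polynomial.trailingCoeff_eq_zero.mp h)
      have hk1 : 1 ≤ k := by
        by_contra h
        push_neg at h
        interval_cases k
        exact hbne (by rw [hb]; exact hcase f hfP)
      obtain ⟨u, hu⟩ : X ^ k ∣ (f : Polynomial B) := by
        rw [X_pow_dvd_iff]
        intro d hd
        exact Polynomial.coeff_eq_zero_of_lt_natTrailingDegree hd
      have hu0 : u.coeff 0 = b := by
        have := Polynomial.coeff_X_pow_mul u k 0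
        rw [← hu] at this
        simpa [hb] using this.symm
      -- b * X^k ∈ T
      have hbXk : (C b * X ^ k : Polynomial B) ∈ fieldComposite B A := by
        show (C b * X ^ k : Polynomial B).coeff 0 ∈ A
        rw [Polynomial.mul_coeff_zero, Polynomial.coeff_X_pow]
        have hne : ¬ (0 = k) := by omega
        simpa [hne] using A.zero_mem
      have hbuT : (C b⁻¹ * u : Polynomial B) ∈ fieldComposite B A := by
        show (C b⁻¹ * u : Polynomial B).coeff 0 ∈ A
        rw [Polynomial.mul_coeff_zero, Polynomial.coeff_C, hu0]
        simpa [inv_mul_cancel₀ hbne] using A.one_mem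
      have hfact : f = (⟨C b * X ^ k, hbXk⟩ : fieldComposite B A) * ⟨C b⁻¹ * u, hbuT⟩ := by
        apply Subtype.ext
        push_cast
        rw [hu]
        rw [show (C b * X ^ k) * (C b⁻¹ * u) = (C b * C b⁻¹) * (X ^ k * u) by ring,
          ← C_mul, mul_inv_cancel₀ hbne, C_1, one_mul]
      have hbXkP : (⟨C b * X ^ k, hbXk⟩ : fieldComposite B A) ∈ P := by
        rcases hP.mem_or_mem (hfact ▸ hfP) with h | h
        · exact h
        · exfalso
          have := hcase _ h
          rw [show ((⟨C b⁻¹ * u, hbuT⟩ : fieldComposite B A) : Polynomial B).coeff 0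
              = b⁻¹ * b by simp [Polynomial.mul_coeff_zero, hu0]] at this
          exact hbne (by field_simp at this; exact absurd this one_ne_zero)
      -- M ⊆ P
      have hMP : ∀ t : fieldComposite B A, (t : Polynomial B).coeff 0 = 0 → t ∈ P := by
        intro t ht0
        obtain ⟨h, hh⟩ : X ∣ (t : Polynomial B) := X_dvd_iff.mpr ht0
        have hXh : (C b⁻¹ * X * h ^ (k + 1) : Polynomial B) ∈ fieldComposite B A := by
          show (C b⁻¹ * X * h ^ (k + 1) : Polynomial B).coeff 0 ∈ A
          rw [show (C b⁻¹ * X * h ^ (k+1) : Polynomial B) = X * (C b⁻¹ * h ^ (k+1)) by ring]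
          rw [Polynomial.mul_coeff_zero]
          simpa using A.zero_mem
        have hpow : t ^ (k + 1)
            = (⟨C b * X ^ k, hbXk⟩ : fieldComposite B A) * ⟨C b⁻¹ * X * h ^ (k + 1), hXh⟩ := by
          apply Subtype.ext
          push_cast
          rw [hh]
          rw [show (C b * X ^ k) * (C b⁻¹ * X * h ^ (k+1)) = (C b * C b⁻¹) * ((X * h) ^ (k+1)) by ring,
            ← C_mul, mul_inv_cancel₀ hbne, C_1, one_mul]
        refine hP.mem_of_pow_mem (k + 1) ?_
        rw [hpow]
        exact Ideal.mul_mem_right _ _ hbXkP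
      intro t htP
      set c : B := (t : Polynomial B).coeff 0 with hc
      have hcA : c ∈ A := t.2
      have hcne : c ≠ 0 := by
        intro h
        exact htP (hMP t (by rw [← hc, h]))
      refine ⟨⟨C c⁻¹, hmemC _ (A.inv_mem hcA)⟩, ?_⟩
      refine hMP _ ?_
      push_cast
      simp [Polynomial.mul_coeff_zero, ← hc, mul_inv_cancel₀ hcne]
  -- conclude maximality from key
  rw [Ideal.isMaximal_iff]
  constructor
  · intro h1
    exact hP.ne_top ((Ideal.eq_top_iff_one _).mpr h1)
  · intro J x hPJ hxP hxJ
    obtain ⟨s, hs⟩ := key x hxP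
    have h1 : (1 : fieldComposite B A) = x * s - (x * s - 1) := by ring
    rw [h1]
    exact Ideal.sub_mem _ (Ideal.mul_mem_right _ _ hxJ) (hPJ hs)
end

section
/- Let n ≥ 1 and let A_0 ⊆ A_1 ⊆ ⋯ ⊆ A_{n-1} ⊆ B be fields. Then every nonzero prime ideal of the composite T_n = A_0 + A_1X + ⋯ + A_{n-1}X^{n-1} + X^nB[X] is a maximal ideal of T_n. In particular, the ideal A_1X + A_2X^2 + ⋯ + A_{n-1}X^{n-1} + X^nB[X] = {f ∈ T_n : f has zero constant coefficient} is a maximal ideal of T_n, since the quotient of T_n by it is isomorphic to A_0. -/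
/-- The composite `T_n = A_0 + A_1 X + ⋯ + A_{n-1} X^{n-1} + X^n B[X]` for a chain of
subfields `A 0 ⊆ A 1 ⊆ ⋯ ⊆ A (n-1) ⊆ B` of a field `B`: the subring (an integral
domain) of `B[X]` of polynomials whose `i`-th coefficient lies in `A i` for all
`i < n`. -/
def fieldCompositeN (B : Type*) [Field B] (n : ℕ) (A : ℕ → Subfield B)
    (hA : ∀ i j, i ≤ j → j < n → A i ≤ A j) : Subring (Polynomial B) where
  carrier := {f | ∀ i, i < n → f.coeff i ∈ A i}
  zero_mem' := fun i _ => by simpa using zero_mem (A i)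
  one_mem' := fun i _ => by
    rw [Polynomial.coeff_one]
    split
    · exact one_mem (A i)
    · exact zero_mem (A i)
  add_mem' := fun hf hg i hi => by
    simpa [Polynomial.coeff_add] using add_mem (hf i hi) (hg i hi)
  neg_mem' := fun hf i hi => by
    simpa [Polynomial.coeff_neg] using neg_mem (s := A i) (hf i hi)
  mul_mem' := by
    intro f g hf hg k hk
    rw [Polynomial.coeff_mul]
    refine sum_mem ?_
    rintro ⟨i, j⟩ hij
    replace hij : i + j = k := by
      first
      | exact Finset.mem_antidiagonal.mp hij
      | simpa using hij
    have hi : i ≤ k := by omega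
    have hj : j ≤ k := by omega
    exact mul_mem (hA i k hi hk (hf i (lt_of_le_of_lt hi hk)))
      (hA j k hj hk (hg j (lt_of_le_of_lt hj hk)))

section Aux
variable (B : Type*) [Field B] (n : ℕ) (A : ℕ → Subfield B)
  (hA : ∀ i j, i ≤ j → j < n → A i ≤ A j)

lemma FCN_mem_iff (f : Polynomial B) :
    f ∈ fieldCompositeN B n A hA ↔ ∀ i, i < n → f.coeff i ∈ A i := Iff.rfl

lemma FCN_Xpow_mul_mem (g : Polynomial B) :
    Polynomial.X ^ n * g ∈ fieldCompositeN B n A hA := by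
  intro i hi
  rw [mul_comm, Polynomial.coeff_mul_X_pow', if_neg (by omega)]
  exact zero_mem _

lemma FCN_Xpow_mem : (Polynomial.X ^ n : Polynomial B) ∈ fieldCompositeN B n A hA := by
  simpa using FCN_Xpow_mul_mem B n A hA 1

lemma FCN_C_mem (a : A 0) : Polynomial.C (a : B) ∈ fieldCompositeN B n A hA := by
  intro i hi
  rw [Polynomial.coeff_C]
  split
  · next h => exact hA 0 i (Nat.zero_le i) (h ▸ hi) a.2
  · exact zero_mem _

def FCN_ev (hn : 0 < n) : fieldCompositeN B n A hA →+* A 0 where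
  toFun f := ⟨(f : Polynomial B).coeff 0, f.2 0 hn⟩
  map_one' := by ext; simp
  map_mul' f g := by ext; simp [Polynomial.mul_coeff_zero]
  map_zero' := by ext; simp
  map_add' f g := by ext; simp

lemma FCN_ev_surjective (hn : 0 < n) :
    Function.Surjective (FCN_ev B n A hA hn) := by
  intro a
  refine ⟨⟨Polynomial.C (a : B), FCN_C_mem B n A hA a⟩, ?_⟩
  ext; simp [FCN_ev]

lemma FCN_ker_ev_max (hn : 0 < n) (I : Ideal (fieldCompositeN B n A hA))
    (hI : ∀ f : fieldCompositeN B n A hA, f ∈ I ↔ (f : Polynomial B).coeff 0 = 0) :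
    I.IsMaximal := by
  have hIk : I = RingHom.ker (FCN_ev B n A hA hn) := by
    ext f
    rw [hI, RingHom.mem_ker]
    exact ⟨fun h => Subtype.ext h, fun h => Subtype.ext_iff.mp h⟩
  rw [hIk]
  exact RingHom.ker_isMaximal_of_surjective _ (FCN_ev_surjective B n A hA hn)

end Aux
/-- Let `n ≥ 1` and let `A 0 ⊆ A 1 ⊆ ⋯ ⊆ A (n-1) ⊆ B` be fields.  Then
every nonzero prime ideal of the composite
`T_n = A_0 + A_1 X + ⋯ + A_{n-1} X^{n-1} + X^n B[X]` is a maximal ideal of `T_n`.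
In particular the ideal `A_1 X + ⋯ + A_{n-1} X^{n-1} + X^n B[X]
 = {f ∈ T_n : f has zero constant coefficient}` is a maximal ideal of `T_n`. -/
theorem fieldCompositeN_prime_ideal_isMaximal (B : Type*) [Field B]
    (n : ℕ) (hn : 1 ≤ n) (A : ℕ → Subfield B)
    (hA : ∀ i j, i ≤ j → j < n → A i ≤ A j) :
    (∀ P : Ideal (fieldCompositeN B n A hA), P ≠ ⊥ → P.IsPrime → P.IsMaximal) ∧
      ∀ I : Ideal (fieldCompositeN B n A hA),
        (∀ f : fieldCompositeN B n A hA, f ∈ I ↔ (f : Polynomial B).coeff 0 = 0) →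
          I.IsMaximal := by
  have h0n : 0 < n := hn
  constructor
  · intro P hPne hP
    set Xn : fieldCompositeN B n A hA := ⟨Polynomial.X ^ n, FCN_Xpow_mem B n A hA⟩
      with hXndef
    set lift : Polynomial B → fieldCompositeN B n A hA :=
      fun g => ⟨Polynomial.X ^ n * g, FCN_Xpow_mul_mem B n A hA g⟩ with hliftdef
    by_cases hXn : Xn ∈ P
    · -- Case 1 : X^n ∈ P, then P = ker ev
      set M : Ideal (fieldCompositeN B n A hA) := RingHom.ker (FCN_ev B n A hA h0n)
        with hMdef
      have hMmax : M.IsMaximal :=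
        RingHom.ker_isMaximal_of_surjective _ (FCN_ev_surjective B n A hA h0n)
      have hMP : M ≤ P := by
        intro f hf
        rw [hMdef, RingHom.mem_ker] at hf
        have hc0 : (f : Polynomial B).coeff 0 = 0 := Subtype.ext_iff.mp hf
        obtain ⟨g, hg⟩ := Polynomial.X_dvd_iff.mpr hc0
        have hpow : f ^ (2 * n) = Xn * lift (g ^ (2 * n)) := by
          apply Subtype.ext
          push_cast
          rw [hg]
          ring
        have h1 : f ^ (2 * n) ∈ P := by
          rw [hpow]
          exact Ideal.mul_mem_right _ P hXn
        exact hP.mem_of_pow_mem _ h1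
      have hMPeq := hMmax.eq_of_le hP.ne_top hMP
      rw [← hMPeq]
      exact hMmax
    · -- Case 2 : X^n ∉ P; conductor argument with Q = {g | X^n g ∈ P}
      have lift_sq : ∀ c g : Polynomial B,
          lift (c * g) ^ 2 = lift g * lift (c ^ 2 * g) := by
        intro c g; apply Subtype.ext; push_cast; ring
      set Q : Ideal (Polynomial B) :=
        { carrier := {g | lift g ∈ P}
          zero_mem' := by
            have h0 : lift 0 = 0 := by apply Subtype.ext; push_cast; ring
            simp only [Set.mem_setOf_eq, h0]
            exact P.zero_mem
          add_mem' := by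
            intro a b ha hb
            have hab : lift (a + b) = lift a + lift b := by
              apply Subtype.ext; push_cast; ring
            simp only [Set.mem_setOf_eq] at *
            rw [hab]
            exact P.add_mem ha hb
          smul_mem' := by
            intro c g hg
            simp only [Set.mem_setOf_eq, smul_eq_mul] at *
            have h2 : lift (c * g) ^ 2 ∈ P := by
              rw [lift_sq]
              exact Ideal.mul_mem_right _ P hg
            exact hP.mem_of_pow_mem _ h2 } with hQdef
      have hmemQ : ∀ g : Polynomial B, g ∈ Q ↔ lift g ∈ P := fun g => Iff.rfl
      have lift_mul : ∀ f g : Polynomial B, lift f * lift g = Xn * lift (f * g) := by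
        intro f g; apply Subtype.ext; push_cast; ring
      have lift_one : lift 1 = Xn := by apply Subtype.ext; push_cast; ring
      have hQprime : Q.IsPrime := by
        constructor
        · intro h
          apply hXn
          have h1 : (1 : Polynomial B) ∈ Q := by rw [h]; trivial
          rw [hmemQ, lift_one] at h1
          exact h1
        · intro f g hfg
          rw [hmemQ] at hfg
          have hm : lift f * lift g ∈ P := by
            rw [lift_mul]
            exact Ideal.mul_mem_left _ _ hfg
          exact hP.mem_or_mem hm
      have hQne : Q ≠ ⊥ := by
        obtain ⟨p, hpP, hp0⟩ := Submodule.exists_mem_ne_zero_of_ne_bot hPne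
        rw [Submodule.ne_bot_iff]
        refine ⟨(p : Polynomial B), ?_, ?_⟩
        · rw [hmemQ]
          have hlp : lift (p : Polynomial B) = Xn * p := by
            apply Subtype.ext; push_cast; ring
          rw [hlp]
          exact Ideal.mul_mem_left _ _ hpP
        · intro h
          exact hp0 (Subtype.ext h)
      haveI := hQprime
      haveI hQmax : Q.IsMaximal := IsPrime.to_maximal_ideal hQne
      letI : Field (Polynomial B ⧸ Q) := Ideal.Quotient.field Q
      set φ : fieldCompositeN B n A hA →+* Polynomial B ⧸ Q :=
        (Ideal.Quotient.mk Q).comp (Subring.subtype _) with hφdef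
      have hφ : ∀ f : fieldCompositeN B n A hA,
          φ f = Ideal.Quotient.mk Q (f : Polynomial B) := fun f => rfl
      have hker : RingHom.ker φ = P := by
        ext f
        rw [RingHom.mem_ker, hφ, Ideal.Quotient.eq_zero_iff_mem, hmemQ]
        have hlf : lift (f : Polynomial B) = Xn * f := by
          apply Subtype.ext; push_cast; ring
        rw [hlf]
        constructor
        · intro h
          rcases hP.mem_or_mem h with h' | h'
          · exact absurd h' hXn
          · exact h'
        · exact fun h => Ideal.mul_mem_left _ _ h
      have hu : (Ideal.Quotient.mk Q Polynomial.X) ^ n ≠ 0 := by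
        intro h
        have h' : (Polynomial.X : Polynomial B) ^ n ∈ Q := by
          rwa [← map_pow, Ideal.Quotient.eq_zero_iff_mem] at h
        rw [hmemQ] at h'
        have hXX : lift (Polynomial.X ^ n) = Xn * Xn := by
          apply Subtype.ext; push_cast; ring
        rw [hXX] at h'
        rcases hP.mem_or_mem h' with h'' | h'' <;> exact hXn h''
      have hsurj : Function.Surjective φ := by
        intro k
        obtain ⟨g, rfl⟩ := Ideal.Quotient.mk_surjective k
        obtain ⟨g₀, hg₀⟩ :=
          Ideal.Quotient.mk_surjective (((Ideal.Quotient.mk Q Polynomial.X) ^ n)⁻¹)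
        refine ⟨lift (g₀ ^ 2 * (Polynomial.X ^ n * g)), ?_⟩
        rw [hφ]
        show Ideal.Quotient.mk Q (Polynomial.X ^ n * (g₀ ^ 2 * (Polynomial.X ^ n * g)))
          = Ideal.Quotient.mk Q g
        simp only [map_mul, map_pow, hg₀]
        field_simp
      rw [← hker]
      exact RingHom.ker_isMaximal_of_surjective φ hsurj
  · intro I hI
    exact FCN_ker_ev_max B n A hA h0n I hI
end

section
/- Let A ⊆ B be fields and let T = A + XB[X]. Then T is atomic: every nonzero nonunit element of T is a finite product of irreducible elements of T. -/
private lemma fc_unit_of_deg0 {B : Type*} [Field B] {A : Subfield B}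
    (f : fieldComposite B A) (h0 : f ≠ 0) (hd : (f : Polynomial B).natDegree = 0) :
    IsUnit f := by
  obtain ⟨c, hc⟩ := Polynomial.natDegree_eq_zero.mp hd
  have hcA : c ∈ A := by
    have h2 : (f : Polynomial B).coeff 0 ∈ A := f.2
    rw [← hc] at h2
    simpa using h2
  have hc0 : c ≠ 0 := by
    rintro rfl
    apply h0
    apply Subtype.ext
    simp [← hc]
  refine IsUnit.of_mul_eq_one (a := f) ⟨Polynomial.C c⁻¹, show (Polynomial.C c⁻¹).coeff 0 ∈ A by simpa using A.inv_mem hcA⟩ ?_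
  apply Subtype.ext
  push_cast
  rw [← hc, ← Polynomial.C_mul, mul_inv_cancel₀ hc0, Polynomial.C_1]

/-- Let `A ⊆ B` be fields and let `T = A + X B[X]`.  Then `T` is atomic:
every nonzero nonunit element of `T` is a finite product of irreducible elements
(atoms) of `T`. -/
theorem fieldComposite_atomic (B : Type*) [Field B] (A : Subfield B)
    (f : fieldComposite B A) (hf0 : f ≠ 0) (hfu : ¬ IsUnit f) :
    ∃ l : Multiset (fieldComposite B A),
      (∀ x ∈ l, Irreducible x) ∧ l.prod = f := by
  suffices H : ∀ n (f : fieldComposite B A), (f : Polynomial B).natDegree = n → f ≠ 0 →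
      ¬ IsUnit f →
      ∃ l : Multiset (fieldComposite B A), (∀ x ∈ l, Irreducible x) ∧ l.prod = f from
    H _ f rfl hf0 hfu
  intro n
  induction n using Nat.strong_induction_on with
  | _ n ih =>
    intro f hn hf0 hfu
    by_cases hirr : Irreducible f
    · exact ⟨{f}, by simpa, by simp⟩
    · rw [irreducible_iff] at hirr
      push_neg at hirr
      obtain ⟨a, b, hab, ha, hb⟩ := hirr hfu
      have ha0 : a ≠ 0 := by rintro rfl; exact hf0 (by rw [hab, zero_mul])
      have hb0 : b ≠ 0 := by rintro rfl; exact hf0 (by rw [hab, mul_zero])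
      have ha0' : (a : Polynomial B) ≠ 0 := by
        simpa [ne_eq, ZeroMemClass.coe_eq_zero] using ha0
      have hb0' : (b : Polynomial B) ≠ 0 := by
        simpa [ne_eq, ZeroMemClass.coe_eq_zero] using hb0
      have hdeg : (a : Polynomial B).natDegree + (b : Polynomial B).natDegree = n := by
        rw [← hn, hab]
        push_cast
        rw [Polynomial.natDegree_mul ha0' hb0']
      have ha1 : 1 ≤ (a : Polynomial B).natDegree := by
        rcases Nat.eq_zero_or_pos (a : Polynomial B).natDegree with h | h
        · exact absurd (fc_unit_of_deg0 a ha0 h) ha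
        · exact h
      have hb1 : 1 ≤ (b : Polynomial B).natDegree := by
        rcases Nat.eq_zero_or_pos (b : Polynomial B).natDegree with h | h
        · exact absurd (fc_unit_of_deg0 b hb0 h) hb
        · exact h
      obtain ⟨la, hla, hlaprod⟩ := ih _ (by omega) a rfl ha0 ha
      obtain ⟨lb, hlb, hlbprod⟩ := ih _ (by omega) b rfl hb0 hb
      refine ⟨la + lb, ?_, ?_⟩
      · intro x hx
        rcases Multiset.mem_add.mp hx with h | h
        · exact hla x h
        · exact hlb x h
      · rw [Multiset.prod_add, hlaprod, hlbprod, hab]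
end

section
/- Let L ⊆ F be fields and let T = L + XF[X]. For f ∈ T, the element f is squarefree in T if and only if either f is squarefree in the polynomial ring F[X], or f = X²h for some h ∈ F[X] that is squarefree in F[X] and whose constant coefficient h(0) is not of the form a²b with a ∈ F and b ∈ L. In other words, Sqf T = (Sqf F[X] ∩ T) ∪ {X²h : h ∈ Sqf F[X], h(0) ∉ {a²b : a ∈ F, b ∈ L}}. -/
namespace SqfCompositeAux

open Polynomial

variable {F : Type*} [Field F] {L : Subfield F}

lemma mem_iff {p : Polynomial F} : p ∈ fieldComposite F L ↔ p.coeff 0 ∈ L := Iff.rfl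

lemma coe_mem (f : fieldComposite F L) : (f : Polynomial F).coeff 0 ∈ L := mem_iff.mp f.2

lemma isUnit_of_isUnit_coe (y : fieldComposite F L) (h : IsUnit (y : Polynomial F)) :
    IsUnit y := by
  obtain ⟨c, hc, hcy⟩ := Polynomial.isUnit_iff.mp h
  have hc0 : c ≠ 0 := hc.ne_zero
  have hcL : c ∈ L := by
    have := coe_mem y
    rw [← hcy] at this
    simpa using this
  refine IsUnit.of_mul_eq_one (a := y) ⟨C c⁻¹, mem_iff.mpr (by simpa using L.inv_mem hcL)⟩ ?_
  apply Subtype.ext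
  show (y : Polynomial F) * C c⁻¹ = 1
  rw [← hcy, ← C_mul, mul_inv_cancel₀ hc0, C_1]

/-- If `f` is squarefree in `T` and `y² ∣ f` in `F[X]` with `y(0) ≠ 0`, then `y` is a
unit of `F[X]`. -/
lemma unit_of_coeff_ne_zero (f : fieldComposite F L) (hsf : Squarefree f)
    (y : Polynomial F) (hy0 : y.coeff 0 ≠ 0) (hdvd : y * y ∣ (f : Polynomial F)) :
    IsUnit y := by
  obtain ⟨g, hg⟩ := hdvd
  set c := y.coeff 0 with hc
  have hy' : C c⁻¹ * y ∈ fieldComposite F L := by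
    rw [mem_iff]
    simp [mul_coeff_zero, ← hc, inv_mul_cancel₀ hy0, one_mem]
  have hg' : C (c * c) * g ∈ fieldComposite F L := by
    rw [mem_iff]
    have hf0 : (f : Polynomial F).coeff 0 ∈ L := coe_mem f
    rw [hg] at hf0
    simpa [mul_coeff_zero, ← hc] using hf0
  have hY : (⟨C c⁻¹ * y, hy'⟩ : fieldComposite F L) * ⟨C c⁻¹ * y, hy'⟩ *
      ⟨C (c * c) * g, hg'⟩ = f := by
    apply Subtype.ext
    show (C c⁻¹ * y) * (C c⁻¹ * y) * (C (c * c) * g) = (f : Polynomial F)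
    have h1 : (C c⁻¹ * y) * (C c⁻¹ * y) * (C (c * c) * g)
        = (C c⁻¹ * C c⁻¹ * C (c * c)) * (y * y * g) := by ring
    have h2 : (C c⁻¹ : Polynomial F) * C c⁻¹ * C (c * c) = 1 := by
      rw [← C_mul, ← C_mul, ← C_1]
      congr 1
      field_simp
    rw [h1, h2, one_mul, hg]
  have hu : IsUnit (⟨C c⁻¹ * y, hy'⟩ : fieldComposite F L) :=
    hsf _ ⟨_, hY.symm⟩
  have hu2 : IsUnit (C c⁻¹ * y) := hu.map (fieldComposite F L).subtype
  have : y = C c * (C c⁻¹ * y) := by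
    rw [← mul_assoc, ← C_mul, mul_inv_cancel₀ hy0, C_1, one_mul]
  rw [this]
  exact (isUnit_C.mpr hy0.isUnit).mul hu2

end SqfCompositeAux


/-- Let `L ⊆ F` be fields and let `T = L + X F[X]`.  For `f ∈ T`, the
element `f` is squarefree in `T` if and only if either `f` is squarefree in the
polynomial ring `F[X]`, or `f = X² h` for some `h ∈ F[X]` which is squarefree in
`F[X]` and whose constant coefficient `h(0)` is not of the form `a² b` with `a ∈ F`
and `b ∈ L`. -/
theorem squarefree_fieldComposite_iff (F : Type*) [Field F] (L : Subfield F)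
    (f : fieldComposite F L) :
    Squarefree f ↔
      Squarefree (f : Polynomial F) ∨
        ∃ h : Polynomial F,
          (f : Polynomial F) = Polynomial.X ^ 2 * h ∧ Squarefree h ∧
            ¬ ∃ (a : F) (b : F), b ∈ L ∧ h.coeff 0 = a ^ 2 * b := by
  open Polynomial SqfCompositeAux in
  constructor
  · intro hsf
    by_cases hF : Squarefree (f : Polynomial F)
    · exact Or.inl hF
    right
    have hfne : (f : Polynomial F) ≠ 0 := by
      intro h0
      exact hsf.ne_zero (Subtype.ext h0)
    rw [Squarefree] at hF
    push_neg at hF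
    obtain ⟨y, hyd, hyu⟩ := hF
    have hy0 : y.coeff 0 = 0 := by
      by_contra h
      exact hyu (unit_of_coeff_ne_zero f hsf y h hyd)
    have hyne : y ≠ 0 := by
      rintro rfl
      exact hfne (zero_dvd_iff.mp (by simpa using hyd))
    obtain ⟨y₁, hy₁⟩ := X_dvd_iff.mpr hy0
    obtain ⟨g, hg⟩ : ∃ g, (f : Polynomial F) = X ^ 2 * g := by
      obtain ⟨g, hgg⟩ := hyd
      exact ⟨y₁ * y₁ * g, by rw [hgg, hy₁]; ring⟩
    have hg0 : g.coeff 0 ≠ 0 := by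
      intro hgz
      obtain ⟨g₁, hg₁⟩ := X_dvd_iff.mpr hgz
      have hY : (⟨X, mem_iff.mpr (by simp [zero_mem])⟩ : fieldComposite F L) *
          ⟨X, mem_iff.mpr (by simp [zero_mem])⟩ *
          ⟨X * g₁, mem_iff.mpr (by simp [mul_coeff_zero, zero_mem])⟩ = f := by
        apply Subtype.ext
        show (X : Polynomial F) * X * (X * g₁) = (f : Polynomial F)
        rw [hg, hg₁]; ring
      have := (hsf _ ⟨_, hY.symm⟩).map (fieldComposite F L).subtype
      exact not_isUnit_X this
    refine ⟨g, hg, ?_, ?_⟩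
    · intro z hz
      obtain ⟨w, hw⟩ := hz
      have hz0 : z.coeff 0 ≠ 0 := by
        intro h0
        apply hg0
        rw [hw]
        simp [mul_coeff_zero, h0]
      exact unit_of_coeff_ne_zero f hsf z hz0
        (dvd_trans ⟨w, hw⟩ ⟨X ^ 2, by rw [hg]; ring⟩)
    · rintro ⟨a, b, hbL, hab⟩
      have ha0 : a ≠ 0 := by
        rintro rfl
        apply hg0
        rw [hab]; ring
      have hGmem : C (a⁻¹ * a⁻¹) * g ∈ fieldComposite F L := by
        rw [mem_iff]
        have : (C (a⁻¹ * a⁻¹) * g).coeff 0 = b := by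
          rw [mul_coeff_zero, coeff_C, hab]
          simp only [if_pos rfl, if_true]
          field_simp
        rwa [this]
      have hXa : C a * X ∈ fieldComposite F L := by
        rw [mem_iff]
        simp [mul_coeff_zero, zero_mem]
      have hY : (⟨C a * X, hXa⟩ : fieldComposite F L) *
          ⟨C a * X, hXa⟩ * ⟨C (a⁻¹ * a⁻¹) * g, hGmem⟩ = f := by
        apply Subtype.ext
        show (C a * X) * (C a * X) * (C (a⁻¹ * a⁻¹) * g) = (f : Polynomial F)
        have h1 : (C a * X) * (C a * X) * (C (a⁻¹ * a⁻¹) * g)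
            = (C a * C a * C (a⁻¹ * a⁻¹)) * (X ^ 2 * g) := by ring
        have h2 : (C a : Polynomial F) * C a * C (a⁻¹ * a⁻¹) = 1 := by
          rw [← C_mul, ← C_mul, ← C_1]
          congr 1
          field_simp
        rw [h1, h2, one_mul, hg]
      have := (hsf _ ⟨_, hY.symm⟩).map (fieldComposite F L).subtype
      exact not_isUnit_X (isUnit_of_mul_isUnit_right this)
  · rintro (hsq | ⟨h, hfh, hsqh, hne⟩)
    · rintro y ⟨g, hgy⟩
      have hco : (f : Polynomial F) = ↑y * ↑y * ↑g := by
        exact_mod_cast congrArg Subtype.val hgy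
      exact isUnit_of_isUnit_coe y (hsq y ⟨g, hco⟩)
    · rintro y ⟨g, hgy⟩
      have hco : (f : Polynomial F) = ↑y * ↑y * ↑g := by
        exact_mod_cast congrArg Subtype.val hgy
      have hg' : (y : Polynomial F) * (y : Polynomial F) * (g : Polynomial F) = X ^ 2 * h := by
        rw [← hfh, ← hco]
      by_cases hc : (y : Polynomial F).coeff 0 = 0
      · -- X ∣ y, then y₁ * y₁ * g = h, so y₁ is a unit, contradiction with hne
        obtain ⟨y₁, hy₁⟩ := X_dvd_iff.mpr hc
        have hcancel : y₁ * y₁ * (g : Polynomial F) = h := by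
          have hX2 : (X : Polynomial F) ^ 2 ≠ 0 := pow_ne_zero _ X_ne_zero
          apply mul_left_cancel₀ hX2
          rw [← hg', hy₁]; ring
        have hu : IsUnit y₁ := hsqh y₁ ⟨g, hcancel.symm⟩
        obtain ⟨a, ha, haC⟩ := Polynomial.isUnit_iff.mp hu
        exfalso
        apply hne
        refine ⟨a, (g : Polynomial F).coeff 0, coe_mem g, ?_⟩
        rw [← hcancel, ← haC, mul_coeff_zero, mul_coeff_zero, coeff_C_zero]
        ring
      · -- X ∤ y, so X² ∣ g, and y² divides h
        have hXy : ¬ (X : Polynomial F) ∣ y := fun hd => hc (X_dvd_iff.mp hd)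
        have h1 : (y : Polynomial F) * (y : Polynomial F) * (g : Polynomial F) = X * (X * h) := by rw [hg']; ring
        have hXg : (X : Polynomial F) ∣ g := by
          rcases prime_X.2.2 _ _ (⟨X * h, h1⟩ : (X : Polynomial F) ∣ (y : Polynomial F) * (y : Polynomial F) * (g : Polynomial F)) with hd | hd
          · rcases prime_X.2.2 _ _ hd with hd' | hd' <;> exact absurd hd' hXy
          · exact hd
        obtain ⟨g₂, hg₂⟩ := hXg
        have h2 : (y : Polynomial F) * (y : Polynomial F) * g₂ = X * h := by
          apply mul_left_cancel₀ (X_ne_zero (R := F))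
          rw [← h1, hg₂]; ring
        have hXg₂ : (X : Polynomial F) ∣ g₂ := by
          rcases prime_X.2.2 _ _ (⟨h, h2⟩ : (X : Polynomial F) ∣ _) with hd | hd
          · rcases prime_X.2.2 _ _ hd with hd' | hd' <;> exact absurd hd' hXy
          · exact hd
        obtain ⟨g₃, hg₃⟩ := hXg₂
        have h3 : (y : Polynomial F) * (y : Polynomial F) * g₃ = h := by
          apply mul_left_cancel₀ (X_ne_zero (R := F))
          rw [← h2, hg₃]; ring
        exact isUnit_of_isUnit_coe y (hsqh _ ⟨g₃, h3.symm⟩)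
end

section
/- Let B be an integral domain containing prime elements p_1, p_2, …, p_{r-1} (r ≥ 2), and let M be a nontrivial additive submonoid of the nonnegative rationals ℚ≥0. Let m_1, m_2, …, m_r ∈ M with m_r < m_{r-1} < ⋯ < m_2 < m_1, such that m_1 is irreducible in M (i.e., m_1 ≠ 0 and whenever m_1 = a + b with a, b ∈ M then a = 0 or b = 0) and m_2, m_3, …, m_r ∉ m_1 + M. Then the element p_{r-1}X^{m_r} − ⋯ − p_2X^{m_3} − p_1X^{m_2} − X^{m_1} is irreducible in the monoid domain B[M]. -/
open scoped NNRat
open AddMonoidAlgebra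

/-- Let `B` be an integral domain containing prime elements
`p 1, p 2, …, p (r-1)` (with `r ≥ 2`), and let `M` be a nontrivial additive submonoid
of the nonnegative rationals `ℚ≥0`.  Let `m 1, m 2, …, m r ∈ M` with
`m r < m (r-1) < ⋯ < m 2 < m 1`, such that `m 1` is irreducible in `M` (i.e. `m 1 ≠ 0`
and whenever `m 1 = a + b` with `a, b ∈ M` then `a = 0` or `b = 0`) and
`m 2, m 3, …, m r ∉ m 1 + M`.  Then the element
`p_{r-1} X^{m_r} − p_{r-2} X^{m_{r-1}} − ⋯ − p_2 X^{m_3} − p_1 X^{m_2} − X^{m_1}`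
is irreducible in the monoid domain `B[M]` (the monoid algebra of `M` over `B`). -/
theorem irreducible_monoidAlgebra_element (B : Type*) [CommRing B] [IsDomain B]
    (r : ℕ) (hr : 2 ≤ r) (p : ℕ → B) (hp : ∀ i, 1 ≤ i → i ≤ r - 1 → Prime (p i))
    (M : AddSubmonoid ℚ≥0) (hM : M ≠ ⊥) (m : ℕ → M)
    (hlt : ∀ i j, 1 ≤ i → i < j → j ≤ r → (m j : ℚ≥0) < (m i : ℚ≥0))
    (hirr : m 1 ≠ 0 ∧ ∀ a b : M, m 1 = a + b → a = 0 ∨ b = 0)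
    (hnot : ∀ i, 2 ≤ i → i ≤ r → ∀ t : M, m i ≠ m 1 + t) :
    Irreducible
      (AddMonoidAlgebra.single (m r) (p (r - 1))
          - (∑ i ∈ Finset.Icc 1 (r - 2), AddMonoidAlgebra.single (m (i + 1)) (p i))
          - AddMonoidAlgebra.single (m 1) (1 : B) :
        AddMonoidAlgebra B M) := by
  have hD : Function.Injective (fun x : M => (x : ℚ≥0)) := Subtype.val_injective
  set D : M → ℚ≥0 := fun x => (x : ℚ≥0) with hDdef
  have hadd : ∀ a b : M, D (a + b) = D a + D b := fun _ _ => rfl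
  have hsingle : ∀ (a : M) (c : B), (single a c).supDegree D ≤ D a := by
    intro a c
    rw [supDegree_single]
    split_ifs
    exacts [bot_le, le_rfl]
  set g : AddMonoidAlgebra B M :=
    AddMonoidAlgebra.single (m r) (p (r - 1))
      - (∑ i ∈ Finset.Icc 1 (r - 2), AddMonoidAlgebra.single (m (i + 1)) (p i)) with hg
  set f : AddMonoidAlgebra B M := g - AddMonoidAlgebra.single (m 1) (1 : B) with hf
  have hm1pos : (0 : ℚ≥0) < D (m 1) := by
    refine lt_of_le_of_ne (zero_le) (fun h => hirr.1 (hD ?_))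
    simpa [hDdef] using h.symm
  -- supDegree of g is < D (m 1)
  have hgdeg : g.supDegree D < D (m 1) := by
    rw [hg]
    refine (supDegree_sub_le (D := D)).trans_lt (sup_lt_iff.mpr ⟨?_, ?_⟩)
    · exact (hsingle _ _).trans_lt (hlt 1 r le_rfl (by omega) le_rfl)
    · refine (supDegree_sum_le (D := D)).trans_lt
        ((Finset.sup_lt_iff (bot_le.trans_lt hm1pos)).mpr ?_)
      intro i hi
      rw [Finset.mem_Icc] at hi
      exact (hsingle _ _).trans_lt (hlt 1 (i + 1) le_rfl (by omega) (by omega))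
  -- rewrite f as g + single (m 1) (-1)
  have hfeq : f = g + AddMonoidAlgebra.single (m 1) (-1 : B) := by
    rw [hf, sub_eq_add_neg, ← AddMonoidAlgebra.single_neg]
  have hdeg1 : (AddMonoidAlgebra.single (m 1) (-1 : B)).supDegree D = D (m 1) :=
    supDegree_single_ne_zero _ (by simp)
  have hfdeg : f.supDegree D = D (m 1) := by
    rw [hfeq, supDegree_add_eq_right (hdeg1 ▸ hgdeg), hdeg1]
  have hflc : f.leadingCoeff D = -1 := by
    rw [hfeq, leadingCoeff_add_eq_right (hdeg1 ▸ hgdeg), leadingCoeff_single hD]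
  have hfne : f ≠ 0 := by
    rw [← leadingCoeff_ne_zero (D := D) hD, hflc]
    simp
  have hfapp : f.coeff (m 1) = -1 := by
    have := hflc
    rwa [leadingCoeff, hfdeg, show D (m 1) = (fun x : M => (x : ℚ≥0)) (m 1) from rfl,
      Function.leftInverse_invFun hD (m 1)] at this
  constructor
  · -- f is not a unit
    rintro ⟨u, hu⟩
    have h1 : f * (↑u⁻¹ : (AddMonoidAlgebra B M)ˣ) = 1 := by
      rw [← hu]; exact u.mul_inv
    have hvne : ((↑u⁻¹ : (AddMonoidAlgebra B M)ˣ) : AddMonoidAlgebra B M) ≠ 0 :=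
      Units.ne_zero _
    have hlcne : f.leadingCoeff D * leadingCoeff D ((↑u⁻¹ : (AddMonoidAlgebra B M)ˣ) : AddMonoidAlgebra B M) ≠ 0 :=
      mul_ne_zero ((leadingCoeff_ne_zero hD).mpr hfne) ((leadingCoeff_ne_zero hD).mpr hvne)
    have hdeg : (f * ↑u⁻¹).supDegree D = f.supDegree D + supDegree D (↑u⁻¹ : AddMonoidAlgebra B M) :=
      supDegree_mul hD hadd hlcne hfne hvne
    rw [h1] at hdeg
    have hone : (1 : AddMonoidAlgebra B M).supDegree D = 0 := by
      rw [one_def, supDegree_single_ne_zero _ one_ne_zero]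
      rfl
    have : D (m 1) ≤ (0 : ℚ≥0) := by
      rw [← hone, hdeg, hfdeg]
      exact le_self_add
    exact absurd (le_antisymm this (zero_le)) hm1pos.ne'
  · rintro u v huv
    have hune : u ≠ 0 := fun h => hfne (by rw [huv, h, zero_mul])
    have hvne : v ≠ 0 := fun h => hfne (by rw [huv, h, mul_zero])
    have hlcne : u.leadingCoeff D * v.leadingCoeff D ≠ 0 :=
      mul_ne_zero ((leadingCoeff_ne_zero hD).mpr hune) ((leadingCoeff_ne_zero hD).mpr hvne)
    have hdeg : (u * v).supDegree D = u.supDegree D + v.supDegree D :=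
      supDegree_mul hD hadd hlcne hune hvne
    obtain ⟨a, ha⟩ := supDegree_mem_range D hune
    obtain ⟨b, hb⟩ := supDegree_mem_range D hvne
    have hab : m 1 = a + b := by
      apply hD
      have : D (m 1) = D a + D b := by rw [ha, hb, ← hdeg, ← huv, hfdeg]
      simpa [hadd] using this
    have key : ∀ w z : AddMonoidAlgebra B M, w ≠ 0 → w.supDegree D = D 0 →
        w * z = f → IsUnit w := by
      intro w z hwne hwdeg hwz
      have hw : w = AddMonoidAlgebra.single 0 (w.coeff 0) := by
        refine AddMonoidAlgebra.ext (Finsupp.ext fun s => ?_)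
        rcases eq_or_ne s 0 with rfl | hs
        · rw [AddMonoidAlgebra.coeff_single_apply, if_pos rfl]
        · rw [AddMonoidAlgebra.coeff_single_apply, if_neg (fun h => hs h.symm)]
          apply apply_eq_zero_of_not_le_supDegree (D := D)
          rw [hwdeg]
          intro hle
          exact hs (hD (le_antisymm hle (zero_le)))
      have hthis := AddMonoidAlgebra.coeff_mul_single_zero z (w.coeff 0) (m 1)
      rw [← hw, mul_comm z w, hwz, hfapp] at hthis
      have hunit : IsUnit (w.coeff 0) :=
        IsUnit.of_mul_eq_one (-(z.coeff (m 1))) (by linear_combination hthis)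
      rw [hw]
      exact hunit.map (singleZeroRingHom (R := B) (M := M))
    rcases hirr.2 a b hab with h0 | h0
    · left
      rw [h0] at ha
      exact key u v hune ha.symm huv.symm
    · right
      rw [h0] at hb
      exact key v u hvne hb.symm (by rw [mul_comm]; exact huv.symm)
end

section
/- Let Z̄ denote the ring of all algebraic integers (the integral closure of ℤ in an algebraic closure of ℚ) and let R = ℤ + X·Z̄[X] be the subring of Z̄[X] of polynomials whose constant coefficient is a rational integer. Then R satisfies the ascending chain condition on principal ideals (ACCP): every ascending chain (f_1) ⊆ (f_2) ⊆ (f_3) ⊆ ⋯ of principal ideals of R stabilizes. -/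
set_option synthInstance.maxHeartbeats 1000000
set_option maxHeartbeats 2000000

/-- An antitone sequence of naturals is eventually constant. -/
lemma antitone_eventually_const : ∀ (v : ℕ) (g : ℕ → ℕ), g 0 = v →
    (∀ i, g (i + 1) ≤ g i) → ∃ N, ∀ k, N ≤ k → g k = g N := by
  intro v
  induction v using Nat.strong_induction_on with
  | _ v IH =>
    intro g hg0 hstep
    by_cases hc : ∀ k, g k = g 0
    · exact ⟨0, fun k _ => (hc k).trans (hc 0).symm⟩
    · push_neg at hc
      obtain ⟨i, hi⟩ := hc
      have hanti : ∀ j k, j ≤ k → g k ≤ g j := fun j k h =>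
        antitone_nat_of_succ_le hstep h
      have hlt : g i < v := by
        have := hanti 0 i (Nat.zero_le i)
        omega
      obtain ⟨N', hN'⟩ := IH (g i) hlt (fun j => g (i + j)) rfl
        (fun j => by rw [Nat.add_succ]; exact hstep (i + j))
      refine ⟨i + N', fun k hk => ?_⟩
      have h1 := hN' (k - i) (by omega)
      rw [Nat.add_sub_cancel' (by omega : i ≤ k)] at h1
      exact h1

open IntermediateField in
lemma key_bound (a : AlgebraicClosure ℚ) (ha0 : a ≠ 0) (ha : IsIntegral ℤ a) :
    ∃ B : ℕ, ∀ (n : ℤ) (b : AlgebraicClosure ℚ), IsIntegral ℤ b → a = n * b →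
      n.natAbs ≤ B := by
  have haQ : IsIntegral ℚ a := ha.tower_top
  haveI : FiniteDimensional ℚ ℚ⟮a⟯ := adjoin.finiteDimensional haQ
  set K := ℚ⟮a⟯
  set α : K := AdjoinSimple.gen ℚ a with hα
  have hαa : (α : AlgebraicClosure ℚ) = a := rfl
  have hαint : IsIntegral ℤ α := by
    rwa [← isIntegral_algebraMap_iff (algebraMap K (AlgebraicClosure ℚ)).injective]
  have hNaint : IsIntegral ℤ (Algebra.norm ℚ α) := Algebra.isIntegral_norm ℚ hαint
  obtain ⟨A, hA⟩ := IsIntegrallyClosed.isIntegral_iff.mp hNaint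
  simp only [algebraMap_int_eq, eq_intCast] at hA
  have hNa0 : Algebra.norm ℚ α ≠ 0 := by
    rw [Algebra.norm_ne_zero_iff]
    intro h
    apply ha0
    rw [← hαa, h]; simp
  have hA0 : A ≠ 0 := by rintro rfl; simp at hA; exact hNa0 hA.symm
  refine ⟨A.natAbs, fun n b hb hab => ?_⟩
  have hn0 : n ≠ 0 := by rintro rfl; simp at hab; exact ha0 hab
  have hne' : ((n : ℤ) : AlgebraicClosure ℚ) ≠ 0 := Int.cast_ne_zero.mpr hn0
  have hbK : b ∈ K := by
    have hnK : ((n : ℤ) : AlgebraicClosure ℚ) ∈ K := intCast_mem K n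
    have haK : a ∈ K := mem_adjoin_simple_self ℚ a
    have : b = ((n : ℤ) : AlgebraicClosure ℚ)⁻¹ * a := by
      rw [hab, inv_mul_cancel_left₀ hne']
    rw [this]
    exact mul_mem (inv_mem hnK) haK
  set β : K := ⟨b, hbK⟩ with hβ
  have hβint : IsIntegral ℤ β := by
    rwa [← isIntegral_algebraMap_iff (algebraMap K (AlgebraicClosure ℚ)).injective]
  obtain ⟨Bq, hBq⟩ := IsIntegrallyClosed.isIntegral_iff.mp (Algebra.isIntegral_norm ℚ hβint)
  simp only [algebraMap_int_eq, eq_intCast] at hBq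
  have hαβ : α = (n : K) * β := by
    apply Subtype.ext
    push_cast
    rw [hαa]
    exact hab
  set d := Module.finrank ℚ K with hd
  have hnorm : Algebra.norm ℚ α = (n : ℚ) ^ d * Algebra.norm ℚ β := by
    rw [hαβ, map_mul]
    congr 1
    rw [show ((n : K)) = algebraMap ℚ K (n : ℚ) by push_cast; rfl, Algebra.norm_algebraMap]
  have heq : A = n ^ d * Bq := by
    have : (A : ℚ) = ((n : ℚ)) ^ d * (Bq : ℚ) := by rw [hA, hnorm, hBq]
    exact_mod_cast this
  have hBq0 : Bq ≠ 0 := by rintro rfl; simp at heq; exact hA0 heq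
  have hd1 : 1 ≤ d := Module.finrank_pos
  calc n.natAbs ≤ n.natAbs ^ d := Nat.le_self_pow (by omega) _
    _ ≤ A.natAbs := Nat.le_of_dvd (Int.natAbs_pos.mpr hA0)
        (by rw [heq, Int.natAbs_mul, Int.natAbs_pow]; exact dvd_mul_right _ _)

/-- The ring `Z̄` of all algebraic integers: the integral closure of `ℤ` in an
algebraic closure of `ℚ`. -/
noncomputable abbrev algInt : Subalgebra ℤ (AlgebraicClosure ℚ) :=
  integralClosure ℤ (AlgebraicClosure ℚ)

/-- `R = ℤ + X ⬝ Z̄[X]`: the subring of the polynomial ring `Z̄[X]` consisting of all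
polynomials whose constant coefficient lies in the image of `ℤ`. -/
noncomputable abbrev intPlusXAlgIntX : Subring (Polynomial algInt) :=
  polynomialComposite algInt (Int.castRingHom algInt).range


/-- Let `Z̄` denote the ring of all algebraic integers (the integral
closure of `ℤ` in an algebraic closure of `ℚ`) and let `R = ℤ + X ⬝ Z̄[X]` be the
subring of `Z̄[X]` of polynomials whose constant coefficient is a rational integer.
Then `R` satisfies the ascending chain condition on principal ideals (ACCP): every
ascending chain `(f 0) ⊆ (f 1) ⊆ (f 2) ⊆ ⋯` of principal ideals of `R` stabilizes. -/
theorem intPlusXAlgIntX_accp (f : ℕ → intPlusXAlgIntX)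
    (hf : ∀ k : ℕ, (Ideal.span {f k} : Ideal intPlusXAlgIntX)
      ≤ Ideal.span {f (k + 1)}) :
    ∃ N : ℕ, ∀ k : ℕ, N ≤ k →
      (Ideal.span {f k} : Ideal intPlusXAlgIntX) = Ideal.span {f N} := by
  classical
  by_cases hz : ∀ k, f k = 0
  · exact ⟨0, fun k _ => by rw [hz k, hz 0]⟩
  push_neg at hz
  obtain ⟨m, hm⟩ := hz
  -- chain of span inclusions
  have hle : ∀ j k, j ≤ k → (Ideal.span {f j} : Ideal intPlusXAlgIntX) ≤ Ideal.span {f k} := by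
    intro j k hjk
    induction k with
    | zero =>
      have : j = 0 := by omega
      subst this; exact le_rfl
    | succ n ih =>
      rcases Nat.lt_or_ge j (n+1) with h | h
      · exact le_trans (ih (by omega)) (hf n)
      · have : j = n + 1 := by omega
        subst this; exact le_rfl
  have hdvd : ∀ j k, j ≤ k → f k ∣ f j := fun j k h =>
    Ideal.mem_span_singleton.mp (hle j k h (Ideal.subset_span rfl))
  have hne : ∀ k, m ≤ k → f k ≠ 0 := by
    intro k hk h0
    obtain ⟨r, hr⟩ := hdvd m k hk
    exact hm (by rw [hr, h0, zero_mul])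
  set F : ℕ → Polynomial algInt := fun k => ((f k : intPlusXAlgIntX) : Polynomial algInt)
    with hF
  have hFne : ∀ k, m ≤ k → F k ≠ 0 := by
    intro k hk h0
    exact hne k hk (Subtype.ext h0)
  have hFdvd : ∀ j k, j ≤ k → F k ∣ F j := by
    intro j k h
    obtain ⟨r, hr⟩ := hdvd j k h
    exact ⟨(r : Polynomial algInt), congrArg Subtype.val hr⟩
  -- degrees stabilize
  obtain ⟨N1, hN1⟩ := antitone_eventually_const _ (fun j => (F (m + j)).natDegree) rfl
    (fun j => by
      refine Polynomial.natDegree_le_of_dvd ?_ (hFne _ (by omega))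
      rw [Nat.add_succ]
      exact hFdvd _ _ (Nat.le_succ _))
  set M := m + N1 with hM
  have hmM : m ≤ M := by omega
  have hdegM : ∀ k, M ≤ k → (F k).natDegree = (F M).natDegree := by
    intro k hk
    have := hN1 (k - m) (by omega)
    rwa [Nat.add_sub_cancel' (by omega : m ≤ k)] at this
  -- beyond M, successive quotients are integer constants
  have hstep : ∀ k, M ≤ k → ∃ c : ℤ, F k = F (k + 1) * Polynomial.C ((c : algInt)) := by
    intro k hk
    obtain ⟨r, hr⟩ := hdvd k (k + 1) (Nat.le_succ k)
    have hr' : F k = F (k + 1) * (r : Polynomial algInt) := congrArg Subtype.val hr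
    have hrne : (r : Polynomial algInt) ≠ 0 := by
      intro h0
      exact hFne k (by omega) (by rw [hr', h0, mul_zero])
    have hdeg : ((r : Polynomial algInt)).natDegree = 0 := by
      have h1 : (F k).natDegree = (F (k+1)).natDegree + ((r : Polynomial algInt)).natDegree := by
        rw [hr']
        exact Polynomial.natDegree_mul (hFne (k+1) (by omega)) hrne
      have h2 := hdegM k hk
      have h3 := hdegM (k+1) (by omega)
      omega
    have hrc : (r : Polynomial algInt) = Polynomial.C (((r : Polynomial algInt)).coeff 0) :=
      Polynomial.eq_C_of_natDegree_eq_zero hdeg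
    obtain ⟨c, hc⟩ : ∃ c : ℤ, ((c : ℤ) : algInt) = ((r : Polynomial algInt)).coeff 0 := r.2
    exact ⟨c, by rw [hr', hrc, ← hc]⟩
  have hcum : ∀ j : ℕ, ∃ mj : ℤ, F M = F (M + j) * Polynomial.C ((mj : algInt)) := by
    intro j
    induction j with
    | zero => exact ⟨1, by simp⟩
    | succ n ih =>
      obtain ⟨mj, hmj⟩ := ih
      obtain ⟨c, hc⟩ := hstep (M + n) (by omega)
      refine ⟨c * mj, ?_⟩
      rw [Int.cast_mul, Polynomial.C_mul, show M + (n + 1) = M + n + 1 from rfl,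
        hmj, hc, mul_assoc]
  set mm : ℕ → ℤ := fun j => (hcum j).choose with hmmdef
  have hmm : ∀ j, F M = F (M + j) * Polynomial.C ((mm j : algInt)) := fun j =>
    (hcum j).choose_spec
  have hFMne : F M ≠ 0 := hFne M hmM
  have hmmne : ∀ j, mm j ≠ 0 := by
    intro j h0
    apply hFMne
    rw [hmm j, h0]
    simp
  have hmmdvd : ∀ j, mm j ∣ mm (j + 1) := by
    intro j
    obtain ⟨c, hc⟩ := hstep (M + j) (by omega)
    have h1 : F (M + (j+1)) * Polynomial.C ((mm (j+1) : algInt))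
        = F (M + (j+1)) * Polynomial.C (((c * mm j : ℤ) : algInt)) := by
      rw [← hmm (j+1), Int.cast_mul, Polynomial.C_mul,
        show M + (j + 1) = M + j + 1 from rfl, hmm j, hc, mul_assoc]
    have h2 := mul_left_cancel₀ (hFne (M + (j+1)) (by omega)) h1
    have h3 : ((mm (j+1) : ℤ) : algInt) = ((c * mm j : ℤ) : algInt) :=
      Polynomial.C_injective h2
    have h4 : mm (j + 1) = c * mm j := Int.cast_injective h3
    exact ⟨c, by rw [h4, mul_comm]⟩
  have hmmdvd' : ∀ i j, i ≤ j → mm i ∣ mm j := by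
    intro i j hij
    induction j, hij using Nat.le_induction with
    | base => exact dvd_rfl
    | succ n hn ih => exact ih.trans (hmmdvd n)
  -- bound on the multipliers via the leading coefficient
  set D := (F M).natDegree with hD
  set a : algInt := (F M).coeff D with ha
  have ha0 : a ≠ 0 := by
    rw [ha, hD]
    exact Polynomial.leadingCoeff_ne_zero.mpr hFMne
  have haa0 : (a : AlgebraicClosure ℚ) ≠ 0 := fun h => ha0 (Subtype.ext h)
  obtain ⟨B, hB⟩ := key_bound (a : AlgebraicClosure ℚ) haa0 a.2
  have hbound : ∀ j, (mm j).natAbs ≤ B := by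
    intro j
    have h1 : a = (F (M + j)).coeff D * ((mm j : ℤ) : algInt) := by
      rw [ha, hmm j, Polynomial.coeff_mul_C]
    refine hB (mm j) ((F (M + j)).coeff D : AlgebraicClosure ℚ)
      ((F (M + j)).coeff D).2 ?_
    have := congrArg (Subtype.val) h1
    push_cast at this
    rw [this, mul_comm]
  have hmono : ∀ j, (mm j).natAbs ≤ (mm (j + 1)).natAbs := fun j =>
    Nat.le_of_dvd (Int.natAbs_pos.mpr (hmmne (j + 1))) (Int.natAbs_dvd_natAbs.mpr (hmmdvd j))
  obtain ⟨N2, hN2⟩ := antitone_eventually_const _ (fun j => B - (mm j).natAbs) rfl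
    (fun j => Nat.sub_le_sub_left (hmono j) B)
  have habs : ∀ j, N2 ≤ j → (mm j).natAbs = (mm N2).natAbs := by
    intro j hj
    have h1 := hN2 j hj
    have h2 := hbound j
    have h3 := hbound N2
    have h4 := hN2 N2 le_rfl
    omega
  refine ⟨M + N2, fun k hk => ?_⟩
  set j := k - M with hj
  have hMj : M + j = k := by omega
  have hdvdj : mm N2 ∣ mm j := hmmdvd' N2 j (by omega)
  have hCne : (Polynomial.C ((mm N2 : ℤ) : algInt) : Polynomial algInt) ≠ 0 :=
    Polynomial.C_ne_zero.mpr (Int.cast_ne_zero.mpr (hmmne N2))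
  rcases Int.natAbs_eq_natAbs_iff.mp (habs j (by omega)) with hcase | hcase
  · -- mm j = mm N2, so F (M + N2) = F k
    have h1 : F (M + N2) * Polynomial.C ((mm N2 : ℤ) : algInt)
        = F k * Polynomial.C ((mm N2 : ℤ) : algInt) := by
      rw [← hmm N2, hmm j, hMj, hcase]
    have h2 : f (M + N2) = f k := Subtype.ext (mul_right_cancel₀ hCne h1)
    rw [h2]
  · -- mm j = -mm N2, so F (M + N2) = -F k
    have h1 : F (M + N2) * Polynomial.C ((mm N2 : ℤ) : algInt)
        = (-(F k)) * Polynomial.C ((mm N2 : ℤ) : algInt) := by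
      rw [← hmm N2, hmm j, hMj, hcase]
      push_cast
      rw [map_neg]; ring
    have h2 : f (M + N2) = -(f k) := Subtype.ext (mul_right_cancel₀ hCne h1)
    rw [h2, ← Ideal.span_singleton_neg (f k)]
end
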